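/- Let G = (V,E,ν,μ) be a locally finite weighted graph with M := sup_x deg_x/ν_x < ∞ and let p ∈ (1,2]. There is a constant C = C(p,M) such that for any finitely supported f : V → ℝ with f ≥ 0, ‖|Df|‖_{ℓ^p(E,μ)} ≤ C ‖√(Γ_p(f))‖_{ℓ^p(V,ν)}, where Γ_p(f)(x) = Σ_y (μ_{xy}/ν_x) γ_p(f(x), f(y)) and γ_p(α,β) = pα(α-β) - α^{2-p}(α^p - β^p). -/

import Mathlib

/-- `γ_p(α,β) = pα(α-β) - α^(2-p)(α^p - β^p)`, with real powers (`0^t = 0` for `t > 0`). -/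
noncomputable def gammaP (p α β : ℝ) : ℝ :=
  p * α * (α - β) - α ^ (2 - p) * (α ^ p - β ^ p)

lemma real_rpow_add_le {a b θ : ℝ} (ha : 0 ≤ a) (hb : 0 ≤ b) (hθ0 : 0 ≤ θ) (hθ1 : θ ≤ 1) :
    (a + b) ^ θ ≤ a ^ θ + b ^ θ := by
  have h := NNReal.rpow_add_le_add_rpow (⟨a, ha⟩ : NNReal) ⟨b, hb⟩ hθ0 hθ1
  have := NNReal.coe_le_coe.mpr h
  exact Real.rpow_add_le_add_rpow ha hb hθ0 hθ1

lemma gammaP_nonneg {p α β : ℝ} (hp1 : 1 < p) (hp2 : p ≤ 2) (hα : 0 ≤ α) (hβ : 0 ≤ β) :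
    0 ≤ gammaP p α β := by
  rcases eq_or_lt_of_le hα with h0 | hα
  · rcases eq_or_lt_of_le hp2 with hp2' | hp2'
    · subst hp2'
      simp only [gammaP, ← h0]
      rw [show (2:ℝ) - 2 = 0 by ring, Real.rpow_zero, Real.zero_rpow (by norm_num : (2:ℝ) ≠ 0)]
      have h := Real.rpow_nonneg hβ (2:ℝ)
      linarith
    · simp only [gammaP, ← h0]
      rw [Real.zero_rpow (by linarith : 2 - p ≠ 0)]
      ring_nf
      simp
  · have hber := one_add_mul_self_le_rpow_one_add
      (show -1 ≤ β / α - 1 by have := div_nonneg hβ hα.le; linarith) hp1.le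
    rw [show 1 + (β / α - 1) = β / α by ring] at hber
    have hdiv : (β / α) ^ p = β ^ p / α ^ p := Real.div_rpow hβ hα.le p
    rw [hdiv] at hber
    have hαp : (0:ℝ) < α ^ p := Real.rpow_pos_of_pos hα p
    have h1 : α ^ p * (1 + p * (β / α - 1)) ≤ β ^ p := by
      rw [mul_comm]
      exact (le_div_iff₀ hαp).mp hber
    have h2 : α ^ p - β ^ p ≤ p * α ^ p * (1 - β / α) := by nlinarith
    have key : α ^ (2 - p) * (α ^ p - β ^ p) ≤ p * α * (α - β) := by
      have h3 : α ^ (2 - p) * (α ^ p - β ^ p) ≤ α ^ (2 - p) * (p * α ^ p * (1 - β / α)) :=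
        mul_le_mul_of_nonneg_left h2 (Real.rpow_nonneg hα.le _)
      have h4 : α ^ (2 - p) * α ^ p = α ^ 2 := by
        rw [← Real.rpow_natCast α 2, ← Real.rpow_add hα]; norm_num
      calc α ^ (2 - p) * (α ^ p - β ^ p) ≤ α ^ (2 - p) * (p * α ^ p * (1 - β / α)) := h3
        _ = p * (α ^ (2 - p) * α ^ p) * (1 - β / α) := by ring
        _ = p * α ^ 2 * (1 - β / α) := by rw [h4]
        _ = p * α * (α - β) := by field_simp
    simpa [gammaP] using sub_nonneg.mpr key

lemma gammaP_symm_ge {p α β : ℝ} (hp1 : 1 < p) (hp2 : p ≤ 2) (hα : 0 ≤ α) (hβ : 0 ≤ β) :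
    (p - 1) * (α - β) ^ 2 ≤ gammaP p α β + gammaP p β α := by
  have e1 : α ^ (2 - p) * α ^ p = α ^ 2 := by
    rw [← Real.rpow_natCast α 2, ← Real.rpow_add' hα (by norm_num)]; norm_num
  have e2 : β ^ (2 - p) * β ^ p = β ^ 2 := by
    rw [← Real.rpow_natCast β 2, ← Real.rpow_add' hβ (by norm_num)]; norm_num
  have key : 2 * (α * β) ≤ α ^ (2 - p) * β ^ p + α ^ p * β ^ (2 - p) := by
    set u := α ^ ((2 - p) / 2) * β ^ (p / 2) with hu
    set v := α ^ (p / 2) * β ^ ((2 - p) / 2) with hv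
    have hu2 : u ^ 2 = α ^ (2 - p) * β ^ p := by
      rw [hu, mul_pow, ← Real.rpow_natCast (α ^ ((2-p)/2)) 2, ← Real.rpow_natCast (β ^ (p/2)) 2,
        ← Real.rpow_mul hα, ← Real.rpow_mul hβ]
      norm_num
    have hv2 : v ^ 2 = α ^ p * β ^ (2 - p) := by
      rw [hv, mul_pow, ← Real.rpow_natCast (α ^ (p/2)) 2, ← Real.rpow_natCast (β ^ ((2-p)/2)) 2,
        ← Real.rpow_mul hα, ← Real.rpow_mul hβ]
      norm_num
    have huv : u * v = α * β := by
      rw [hu, hv]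
      have : α ^ ((2 - p) / 2) * β ^ (p / 2) * (α ^ (p / 2) * β ^ ((2 - p) / 2))
          = (α ^ ((2 - p) / 2) * α ^ (p / 2)) * (β ^ (p / 2) * β ^ ((2 - p) / 2)) := by ring
      rw [this, ← Real.rpow_add' hα (by rw [show (2 - p) / 2 + p / 2 = 1 by ring]; norm_num),
        ← Real.rpow_add' hβ (by rw [show p / 2 + (2 - p) / 2 = 1 by ring]; norm_num),
        show (2 - p) / 2 + p / 2 = 1 by ring, show p / 2 + (2 - p) / 2 = 1 by ring,
        Real.rpow_one, Real.rpow_one]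
    nlinarith [sq_nonneg (u - v)]
  have expand : gammaP p α β + gammaP p β α
      = p * (α - β) ^ 2 - (α ^ 2 - α ^ (2-p) * β ^ p - β ^ (2-p) * α ^ p + β ^ 2) := by
    simp only [gammaP]; linear_combination -e1 - e2
  nlinarith [key]

lemma abs_pow_le_gamma {p α β : ℝ} (hp1 : 1 < p) (hp2 : p ≤ 2) (hα : 0 ≤ α) (hβ : 0 ≤ β) :
    |α - β| ^ p ≤ (1 / (p - 1)) ^ (p / 2) *
      (gammaP p α β ^ (p / 2) + gammaP p β α ^ (p / 2)) := by
  have hγ1 := gammaP_nonneg hp1 hp2 hα hβ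
  have hγ2 := gammaP_nonneg hp1 hp2 hβ hα
  have hps : (0:ℝ) ≤ p / 2 := by linarith
  have hp1' : (0:ℝ) < p - 1 := by linarith
  have e1 : |α - β| ^ p = ((α - β) ^ 2) ^ (p / 2) := by
    rw [← sq_abs, ← Real.rpow_natCast |α - β| 2, ← Real.rpow_mul (abs_nonneg _),
      show ((2:ℕ):ℝ) * (p / 2) = p by push_cast; ring]
  have hle : (α - β) ^ 2 ≤ (gammaP p α β + gammaP p β α) / (p - 1) := by
    rw [le_div_iff₀ hp1']
    nlinarith [gammaP_symm_ge hp1 hp2 hα hβ]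
  have hsum : (0:ℝ) ≤ gammaP p α β + gammaP p β α := by linarith
  calc |α - β| ^ p = ((α - β) ^ 2) ^ (p / 2) := e1
    _ ≤ ((gammaP p α β + gammaP p β α) / (p - 1)) ^ (p / 2) :=
        Real.rpow_le_rpow (sq_nonneg _) hle hps
    _ = (1 / (p - 1)) ^ (p / 2) * (gammaP p α β + gammaP p β α) ^ (p / 2) := by
        rw [show (gammaP p α β + gammaP p β α) / (p - 1)
            = (1 / (p - 1)) * (gammaP p α β + gammaP p β α) by ring,
          Real.mul_rpow (by positivity) hsum]
    _ ≤ (1 / (p - 1)) ^ (p / 2) * (gammaP p α β ^ (p / 2) + gammaP p β α ^ (p / 2)) :=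
        mul_le_mul_of_nonneg_left (real_rpow_add_le hγ1 hγ2 hps (by linarith))
          (Real.rpow_nonneg (by positivity) _)

lemma holder_finset {ι : Type*} (t : Finset ι) (w a : ι → ℝ) (hw : ∀ i, 0 ≤ w i)
    (ha : ∀ i, 0 ≤ a i) {θ : ℝ} (hθ : 0 < θ) (hθ1 : θ ≤ 1) :
    ∑ i ∈ t, w i * a i ^ θ ≤ (∑ i ∈ t, w i) ^ (1 - θ) * (∑ i ∈ t, w i * a i) ^ θ := by
  set W := ∑ i ∈ t, w i with hW
  have hW0 : 0 ≤ W := Finset.sum_nonneg fun i _ => hw i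
  rcases eq_or_lt_of_le hW0 with hW0' | hWpos
  · have hz : ∀ i ∈ t, w i = 0 := by
      intro i hi
      exact (Finset.sum_eq_zero_iff_of_nonneg (fun j _ => hw j)).mp hW0'.symm i hi
    have : ∑ i ∈ t, w i * a i ^ θ = 0 :=
      Finset.sum_eq_zero fun i hi => by rw [hz i hi, zero_mul]
    rw [this]
    have h2 : ∑ i ∈ t, w i * a i = 0 :=
      Finset.sum_eq_zero fun i hi => by rw [hz i hi, zero_mul]
    rw [h2]
    positivity
  · have key := Real.arith_mean_le_rpow_mean t (fun i => w i / W) (fun i => a i ^ θ)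
      (fun i _ => div_nonneg (hw i) hW0)
      (by rw [← Finset.sum_div, div_self hWpos.ne'])
      (fun i _ => Real.rpow_nonneg (ha i) θ)
      (show (1:ℝ) ≤ 1/θ by rw [le_div_iff₀ hθ, one_mul]; exact hθ1)
    have simp1 : ∀ i, (a i ^ θ) ^ (1/θ : ℝ) = a i := by
      intro i
      rw [← Real.rpow_mul (ha i), mul_one_div, div_self hθ.ne', Real.rpow_one]
    simp only [simp1, one_div_one_div] at key
    have lhs_eq : ∑ i ∈ t, w i * a i ^ θ = W * ∑ i ∈ t, w i / W * a i ^ θ := by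
      rw [Finset.mul_sum]
      refine Finset.sum_congr rfl fun i _ => ?_
      field_simp
    have rhs_eq : ∑ i ∈ t, w i / W * a i = (∑ i ∈ t, w i * a i) / W := by
      rw [Finset.sum_div]
      refine Finset.sum_congr rfl fun i _ => ?_
      ring
    have hsa : 0 ≤ ∑ i ∈ t, w i * a i :=
      Finset.sum_nonneg fun i _ => mul_nonneg (hw i) (ha i)
    calc ∑ i ∈ t, w i * a i ^ θ = W * ∑ i ∈ t, w i / W * a i ^ θ := lhs_eq
      _ ≤ W * (∑ i ∈ t, w i / W * a i) ^ θ := by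
          apply mul_le_mul_of_nonneg_left _ hW0
          exact key
      _ = W * ((∑ i ∈ t, w i * a i) / W) ^ θ := by rw [rhs_eq]
      _ = W ^ (1 - θ) * (∑ i ∈ t, w i * a i) ^ θ := by
          rw [Real.div_rpow hsa hW0, Real.rpow_sub hWpos, Real.rpow_one]
          field_simp

theorem edge_norm_le_pseudo_gradient_norm (p M : ℝ) (hp1 : 1 < p) (hp2 : p ≤ 2) (hM0 : 0 ≤ M) :
    ∃ C : ℝ, 0 < C ∧
      ∀ (V : Type) (ν : V → ℝ) (μ : V → V → ℝ),
        (∀ x, 0 < ν x) → (∀ x y, μ x y = μ y x) → (∀ x y, 0 ≤ μ x y) →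
        (∀ x, (Function.support (μ x)).Finite) →
        (∀ x, (∑' y, μ x y) / ν x ≤ M) →
        ∀ f : V → ℝ, (Function.support f).Finite → (∀ x, 0 ≤ f x) →
          ((1 / 2) * ∑' x, ∑' y, μ x y * |f x - f y| ^ p) ^ (1 / p)
            ≤ C * (∑' x,
                Real.sqrt ((∑' y, μ x y * gammaP p (f x) (f y)) / ν x) ^ p * ν x) ^ (1 / p) := by
  have hp0 : (0:ℝ) < p := by linarith
  set θ : ℝ := p / 2 with hθdef
  have hθpos : 0 < θ := by rw [hθdef]; linarith
  have hθ1 : θ ≤ 1 := by rw [hθdef]; linarith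
  set K : ℝ := (1 / (p - 1)) ^ (p / 2) with hKdef
  have hKpos : 0 < K :=
    Real.rpow_pos_of_pos (one_div_pos.mpr (by linarith : (0:ℝ) < p - 1)) _
  set Cp : ℝ := K * (M ^ (1 - θ) + 1) with hCpdef
  have hCppos : 0 < Cp := by
    apply mul_pos hKpos
    have := Real.rpow_nonneg hM0 (1 - θ)
    linarith
  refine ⟨Cp ^ (1/p : ℝ), Real.rpow_pos_of_pos hCppos _, ?_⟩
  intro V ν μ hν hsymm hμ0 hμfin hM f hffin hf0
  classical
  set X : Finset V := hffin.toFinset ∪ hffin.toFinset.biUnion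
      (fun s => (hμfin s).toFinset) with hXdef
  -- outside X everything vanishes
  have hout : ∀ x ∉ X, f x = 0 ∧ ∀ y, μ x y ≠ 0 → f y = 0 := by
    intro x hx
    constructor
    · by_contra h
      exact hx (Finset.mem_union_left _ (hffin.mem_toFinset.mpr h))
    · intro y hμxy
      by_contra h
      apply hx
      refine Finset.mem_union_right _ (Finset.mem_biUnion.mpr
        ⟨y, hffin.mem_toFinset.mpr h, ?_⟩)
      rw [(hμfin y).mem_toFinset, Function.mem_support]
      rw [← hsymm x y]
      exact hμxy
  have hkey : ∀ x y : V, x ∉ X ∨ y ∉ X → μ x y = 0 ∨ (f x = 0 ∧ f y = 0) := by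
    intro x y h
    by_cases hμ : μ x y = 0
    · exact Or.inl hμ
    · right
      rcases h with hx | hy
      · exact ⟨(hout x hx).1, (hout x hx).2 y hμ⟩
      · have hμ' : μ y x ≠ 0 := by rw [hsymm y x]; exact hμ
        exact ⟨(hout y hy).2 x hμ', (hout y hy).1⟩
  -- vanishing of the edge terms and gamma terms
  have hE0 : ∀ x y : V, x ∉ X ∨ y ∉ X → μ x y * |f x - f y| ^ p = 0 := by
    intro x y h
    rcases hkey x y h with h0 | ⟨h1, h2⟩
    · rw [h0, zero_mul]
    · rw [h1, h2, sub_zero, abs_zero, Real.zero_rpow hp0.ne', mul_zero]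
  have hG0 : ∀ x y : V, x ∉ X ∨ y ∉ X → μ x y * gammaP p (f x) (f y) = 0 := by
    intro x y h
    rcases hkey x y h with h0 | ⟨h1, h2⟩
    · rw [h0, zero_mul]
    · rw [h1, h2]
      simp [gammaP]
  -- LHS tsum equals finite double sum
  have hLHS : ∑' x, ∑' y, μ x y * |f x - f y| ^ p
      = ∑ x ∈ X, ∑ y ∈ X, μ x y * |f x - f y| ^ p := by
    have hin : ∀ x : V, ∑' y, μ x y * |f x - f y| ^ p
        = ∑ y ∈ X, μ x y * |f x - f y| ^ p := by
      intro x
      exact tsum_eq_sum fun y hy => hE0 x y (Or.inr hy)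
    rw [tsum_congr hin]
    exact tsum_eq_sum fun x hx => Finset.sum_eq_zero fun y _ => hE0 x y (Or.inl hx)
  -- RHS: terms are nonneg and vanish outside X
  have hRterm_nonneg : ∀ x : V,
      0 ≤ Real.sqrt ((∑' y, μ x y * gammaP p (f x) (f y)) / ν x) ^ p * ν x := by
    intro x
    exact mul_nonneg (Real.rpow_nonneg (Real.sqrt_nonneg _) _) (hν x).le
  have hRterm0 : ∀ x ∉ X,
      Real.sqrt ((∑' y, μ x y * gammaP p (f x) (f y)) / ν x) ^ p * ν x = 0 := by
    intro x hx
    have : ∑' y, μ x y * gammaP p (f x) (f y) = 0 := by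
      rw [tsum_congr (fun y => hG0 x y (Or.inl hx))]
      exact tsum_zero
    rw [this, zero_div, Real.sqrt_zero, Real.zero_rpow hp0.ne', zero_mul]
  have hRsummable : Summable (fun x =>
      Real.sqrt ((∑' y, μ x y * gammaP p (f x) (f y)) / ν x) ^ p * ν x) :=
    summable_of_ne_finset_zero hRterm0
  set R : ℝ := ∑' x, Real.sqrt ((∑' y, μ x y * gammaP p (f x) (f y)) / ν x) ^ p * ν x with hRdef
  have hR0 : 0 ≤ R := tsum_nonneg hRterm_nonneg
  have hRX : ∑ x ∈ X, Real.sqrt ((∑' y, μ x y * gammaP p (f x) (f y)) / ν x) ^ p * ν x ≤ R :=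
    Summable.sum_le_tsum X (fun x _ => hRterm_nonneg x) hRsummable
  -- gamma nonneg
  have hγ : ∀ x y : V, 0 ≤ gammaP p (f x) (f y) :=
    fun x y => gammaP_nonneg hp1 hp2 (hf0 x) (hf0 y)
  -- Step 1: pointwise estimate and symmetrization
  have step1 : ∑ x ∈ X, ∑ y ∈ X, μ x y * |f x - f y| ^ p
      ≤ 2 * K * ∑ x ∈ X, ∑ y ∈ X, μ x y * gammaP p (f x) (f y) ^ θ := by
    have h1 : ∑ x ∈ X, ∑ y ∈ X, μ x y * |f x - f y| ^ p
        ≤ ∑ x ∈ X, ∑ y ∈ X, μ x y *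
            (K * (gammaP p (f x) (f y) ^ θ + gammaP p (f y) (f x) ^ θ)) := by
      refine Finset.sum_le_sum fun x _ => Finset.sum_le_sum fun y _ => ?_
      exact mul_le_mul_of_nonneg_left (abs_pow_le_gamma hp1 hp2 (hf0 x) (hf0 y)) (hμ0 x y)
    have h2 : ∑ x ∈ X, ∑ y ∈ X, μ x y * gammaP p (f y) (f x) ^ θ
        = ∑ x ∈ X, ∑ y ∈ X, μ x y * gammaP p (f x) (f y) ^ θ := by
      rw [Finset.sum_comm]
      refine Finset.sum_congr rfl fun x _ => Finset.sum_congr rfl fun y _ => ?_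
      rw [hsymm y x]
    calc ∑ x ∈ X, ∑ y ∈ X, μ x y * |f x - f y| ^ p
        ≤ ∑ x ∈ X, ∑ y ∈ X, μ x y *
            (K * (gammaP p (f x) (f y) ^ θ + gammaP p (f y) (f x) ^ θ)) := h1
      _ = K * (∑ x ∈ X, ∑ y ∈ X, μ x y * gammaP p (f x) (f y) ^ θ)
          + K * (∑ x ∈ X, ∑ y ∈ X, μ x y * gammaP p (f y) (f x) ^ θ) := by
          rw [Finset.mul_sum, Finset.mul_sum, ← Finset.sum_add_distrib]
          refine Finset.sum_congr rfl fun x _ => ?_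
          rw [Finset.mul_sum, Finset.mul_sum, ← Finset.sum_add_distrib]
          refine Finset.sum_congr rfl fun y _ => ?_
          ring
      _ = 2 * K * ∑ x ∈ X, ∑ y ∈ X, μ x y * gammaP p (f x) (f y) ^ θ := by
          rw [h2]; ring
  -- Step 2: per-vertex Hölder
  have step2 : ∑ x ∈ X, ∑ y ∈ X, μ x y * gammaP p (f x) (f y) ^ θ
      ≤ M ^ (1 - θ) * ∑ x ∈ X,
          Real.sqrt ((∑' y, μ x y * gammaP p (f x) (f y)) / ν x) ^ p * ν x := by
    rw [Finset.mul_sum]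
    refine Finset.sum_le_sum fun x _ => ?_
    have hμsummable : Summable (μ x) :=
      summable_of_ne_finset_zero (s := (hμfin x).toFinset)
        (fun y hy => by
          by_contra h
          exact hy ((hμfin x).mem_toFinset.mpr (Function.mem_support.mpr h)))
    have hGsummable : Summable (fun y => μ x y * gammaP p (f x) (f y)) :=
      summable_of_ne_finset_zero (s := (hμfin x).toFinset)
        (fun y hy => by
          have : μ x y = 0 := by
            by_contra h
            exact hy ((hμfin x).mem_toFinset.mpr (Function.mem_support.mpr h))
          rw [this, zero_mul])
    set G : ℝ := ∑' y, μ x y * gammaP p (f x) (f y) with hGdef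
    have hGnn : 0 ≤ G := tsum_nonneg fun y => mul_nonneg (hμ0 x y) (hγ x y)
    have hwle : ∑ y ∈ X, μ x y ≤ M * ν x := by
      calc ∑ y ∈ X, μ x y ≤ ∑' y, μ x y := Summable.sum_le_tsum X (fun y _ => hμ0 x y) hμsummable
        _ ≤ M * ν x := by
            have := hM x
            rw [div_le_iff₀ (hν x)] at this
            linarith
    have hwnn : 0 ≤ ∑ y ∈ X, μ x y := Finset.sum_nonneg fun y _ => hμ0 x y
    have hgle : ∑ y ∈ X, μ x y * gammaP p (f x) (f y) ≤ G :=
      Summable.sum_le_tsum X (fun y _ => mul_nonneg (hμ0 x y) (hγ x y)) hGsummable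
    have hgnn : 0 ≤ ∑ y ∈ X, μ x y * gammaP p (f x) (f y) :=
      Finset.sum_nonneg fun y _ => mul_nonneg (hμ0 x y) (hγ x y)
    have holder := holder_finset X (fun y => μ x y) (fun y => gammaP p (f x) (f y))
      (hμ0 x) (hγ x) hθpos hθ1
    have hmono : (∑ y ∈ X, μ x y) ^ (1 - θ) * (∑ y ∈ X, μ x y * gammaP p (f x) (f y)) ^ θ
        ≤ (M * ν x) ^ (1 - θ) * G ^ θ := by
      apply mul_le_mul
      · exact Real.rpow_le_rpow hwnn hwle (by linarith)
      · exact Real.rpow_le_rpow hgnn hgle hθpos.le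
      · exact Real.rpow_nonneg hgnn _
      · exact Real.rpow_nonneg (mul_nonneg hM0 (hν x).le) _
    have hident : (M * ν x) ^ (1 - θ) * G ^ θ
        = M ^ (1 - θ) * (Real.sqrt (G / ν x) ^ p * ν x) := by
      have hsqrt : Real.sqrt (G / ν x) ^ p = (G / ν x) ^ θ := by
        rw [Real.sqrt_eq_rpow, ← Real.rpow_mul (div_nonneg hGnn (hν x).le),
          show 1 / 2 * p = θ by rw [hθdef]; ring]
      rw [hsqrt, Real.mul_rpow hM0 (hν x).le, Real.div_rpow hGnn (hν x).le,
        Real.rpow_sub (hν x), Real.rpow_one]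
      ring
    calc ∑ y ∈ X, μ x y * gammaP p (f x) (f y) ^ θ
        ≤ (∑ y ∈ X, μ x y) ^ (1 - θ) * (∑ y ∈ X, μ x y * gammaP p (f x) (f y)) ^ θ := holder
      _ ≤ (M * ν x) ^ (1 - θ) * G ^ θ := hmono
      _ = M ^ (1 - θ) * (Real.sqrt (G / ν x) ^ p * ν x) := hident
  -- assemble
  have chain : ∑ x ∈ X, ∑ y ∈ X, μ x y * |f x - f y| ^ p
      ≤ 2 * K * (M ^ (1 - θ) * R) := by
    refine step1.trans ?_
    have h2 : M ^ (1 - θ) * (∑ x ∈ X,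
          Real.sqrt ((∑' y, μ x y * gammaP p (f x) (f y)) / ν x) ^ p * ν x)
        ≤ M ^ (1 - θ) * R :=
      mul_le_mul_of_nonneg_left hRX (Real.rpow_nonneg hM0 _)
    exact mul_le_mul_of_nonneg_left (step2.trans h2) (by positivity)
  have final1 : (1 / 2) * (∑ x ∈ X, ∑ y ∈ X, μ x y * |f x - f y| ^ p) ≤ Cp * R := by
    have h3 : K * M ^ (1 - θ) ≤ Cp := by
      rw [hCpdef]; nlinarith [hKpos]
    have h4 : (K * M ^ (1 - θ)) * R ≤ Cp * R := mul_le_mul_of_nonneg_right h3 hR0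
    nlinarith [chain]
  have hfin_nonneg : 0 ≤ (1 / 2) * (∑ x ∈ X, ∑ y ∈ X, μ x y * |f x - f y| ^ p) := by
    apply mul_nonneg (by norm_num)
    exact Finset.sum_nonneg fun x _ => Finset.sum_nonneg fun y _ =>
      mul_nonneg (hμ0 x y) (Real.rpow_nonneg (abs_nonneg _) _)
  rw [hLHS]
  calc ((1 / 2) * ∑ x ∈ X, ∑ y ∈ X, μ x y * |f x - f y| ^ p) ^ (1 / p)
      ≤ (Cp * R) ^ (1 / p) := Real.rpow_le_rpow hfin_nonneg final1 (by positivity)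
    _ = Cp ^ (1 / p : ℝ) * R ^ (1 / p) := Real.mul_rpow hCppos.le hR0
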